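/- Let ℓ ≥ 2 and let S be a resolving set of the grid graph G_ℓ. Let {x,y} be an S-unique diagonal pair with associated vertex u such that d(x,y) = 2, and let {r,s} and {t,z} be two further S-unique diagonal pairs, the three pairs pairwise distinct, lying in the same row (respectively, the same column) as {x,y}, with associated vertices v and w respectively. If u ≠ v and u ≠ w, then v = w. -/

import Mathlib

/-- The `a × b` grid graph on `Fin a × Fin b`: two vertices are adjacent iff they
differ by exactly 1 in one coordinate and agree in the other (i.e. their taxicab
distance is 1). -/
def gridGraph (a b : ℕ) : SimpleGraph (Fin a × Fin b) where
  Adj x y := ((x.1 : ℕ) - y.1) + ((y.1 : ℕ) - x.1) + ((x.2 : ℕ) - y.2) + ((y.2 : ℕ) - x.2) = 1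
  symm := ⟨by intro x y h; omega⟩
  loopless := ⟨by intro x h; omega⟩

/-- `S` is a resolving set of `G`. -/
def IsResolvingSet {V : Type*} (G : SimpleGraph V) (S : Set V) : Prop :=
  ∀ x y : V, x ≠ y → ∃ u ∈ S, G.dist u x ≠ G.dist u y

/-- taxicab distance -/
def gridTax {a b : ℕ} (p q : Fin a × Fin b) : ℕ :=
  ((p.1 : ℕ) - q.1) + ((q.1 : ℕ) - p.1) + ((p.2 : ℕ) - q.2) + ((q.2 : ℕ) - p.2)

lemma grid_adj_iff {a b : ℕ} (p q : Fin a × Fin b) :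
    (gridGraph a b).Adj p q ↔ gridTax p q = 1 := Iff.rfl

lemma grid_exists_walk {a b : ℕ} : ∀ (n : ℕ) (p q : Fin a × Fin b), gridTax p q = n →
    ∃ W : (gridGraph a b).Walk p q, W.length = n := by
  intro n
  induction n with
  | zero =>
    intro p q h
    have hpq : p = q := by
      have h1 : (p.1 : ℕ) = q.1 := by unfold gridTax at h; omega
      have h2 : (p.2 : ℕ) = q.2 := by unfold gridTax at h; omega
      exact Prod.ext (Fin.val_injective h1) (Fin.val_injective h2)
    subst hpq; exact ⟨.nil, rfl⟩
  | succ n ih =>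
    intro p q h
    unfold gridTax at h
    rcases Nat.lt_or_ge (p.1 : ℕ) q.1 with h1 | h1
    · have hb : (p.1 : ℕ) + 1 < a := lt_of_le_of_lt h1 q.1.isLt
      set p' : Fin a × Fin b := (⟨(p.1 : ℕ) + 1, hb⟩, p.2) with hp'
      have hadj : (gridGraph a b).Adj p p' := by
        rw [grid_adj_iff]; unfold gridTax; simp [hp']
      have htax : gridTax p' q = n := by unfold gridTax; simp [hp']; omega
      obtain ⟨W, hW⟩ := ih p' q htax
      exact ⟨.cons hadj W, by simp [hW]⟩
    · rcases Nat.lt_or_ge (q.1 : ℕ) p.1 with h2 | h2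
      · have hb : (p.1 : ℕ) - 1 < a := by have := p.1.isLt; omega
        set p' : Fin a × Fin b := (⟨(p.1 : ℕ) - 1, hb⟩, p.2) with hp'
        have hadj : (gridGraph a b).Adj p p' := by
          rw [grid_adj_iff]; unfold gridTax; simp [hp']; omega
        have htax : gridTax p' q = n := by unfold gridTax; simp [hp']; omega
        obtain ⟨W, hW⟩ := ih p' q htax
        exact ⟨.cons hadj W, by simp [hW]⟩
      · rcases Nat.lt_or_ge (p.2 : ℕ) q.2 with h3 | h3
        · have hb : (p.2 : ℕ) + 1 < b := lt_of_le_of_lt h3 q.2.isLt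
          set p' : Fin a × Fin b := (p.1, ⟨(p.2 : ℕ) + 1, hb⟩) with hp'
          have hadj : (gridGraph a b).Adj p p' := by
            rw [grid_adj_iff]; unfold gridTax; simp [hp']
          have htax : gridTax p' q = n := by unfold gridTax; simp [hp']; omega
          obtain ⟨W, hW⟩ := ih p' q htax
          exact ⟨.cons hadj W, by simp [hW]⟩
        · have h4 : (q.2 : ℕ) < p.2 := by omega
          have hb : (p.2 : ℕ) - 1 < b := by have := p.2.isLt; omega
          set p' : Fin a × Fin b := (p.1, ⟨(p.2 : ℕ) - 1, hb⟩) with hp'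
          have hadj : (gridGraph a b).Adj p p' := by
            rw [grid_adj_iff]; unfold gridTax; simp [hp']; omega
          have htax : gridTax p' q = n := by unfold gridTax; simp [hp']; omega
          obtain ⟨W, hW⟩ := ih p' q htax
          exact ⟨.cons hadj W, by simp [hW]⟩

lemma grid_tax_le_walk {a b : ℕ} {p q : Fin a × Fin b} (W : (gridGraph a b).Walk p q) :
    gridTax p q ≤ W.length := by
  induction W with
  | nil => unfold gridTax; omega
  | cons hadj W ih =>
    rw [grid_adj_iff] at hadj
    rename_i u' v' w' _
    unfold gridTax at *
    simp only [SimpleGraph.Walk.length_cons]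
    omega

lemma grid_dist_eq {a b : ℕ} (p q : Fin a × Fin b) :
    (gridGraph a b).dist p q = gridTax p q := by
  obtain ⟨W, hW⟩ := grid_exists_walk (gridTax p q) p q rfl
  apply le_antisymm
  · exact hW ▸ SimpleGraph.dist_le W
  · obtain ⟨W', hW'⟩ := (SimpleGraph.Reachable.exists_walk_length_eq_dist ⟨W⟩)
    calc gridTax p q ≤ W'.length := grid_tax_le_walk W'
    _ = _ := hW'

/-- The set of resolvers of a distance-2 diagonal pair, row-style parameters. -/
lemma grid_resolve_eq {ℓ : ℕ} (x y : Fin ℓ × Fin ℓ)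
    (h1 : (y.1 : ℕ) = (x.1 : ℕ) + 1) (h2 : (x.2 : ℕ) = (y.2 : ℕ) + 1)
    (a c : ℕ) (ha : a = (x.1 : ℕ)) (hc : c = (y.2 : ℕ)) :
    {p : Fin ℓ × Fin ℓ | (gridGraph ℓ ℓ).dist p x ≠ (gridGraph ℓ ℓ).dist p y}
      = {p : Fin ℓ × Fin ℓ |
          ((p.1 : ℕ) ≤ a ∧ c < (p.2 : ℕ)) ∨ (a < (p.1 : ℕ) ∧ (p.2 : ℕ) ≤ c)} := by
  ext p
  simp only [Set.mem_setOf_eq, grid_dist_eq]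
  unfold gridTax
  omega

/-- The set of resolvers of a distance-2 diagonal pair, column-style parameters. -/
lemma grid_resolve_eq' {ℓ : ℕ} (x y : Fin ℓ × Fin ℓ)
    (h1 : (y.1 : ℕ) = (x.1 : ℕ) + 1) (h2 : (x.2 : ℕ) = (y.2 : ℕ) + 1)
    (a c : ℕ) (ha : a = (x.1 : ℕ)) (hc : c = (y.2 : ℕ)) :
    {p : Fin ℓ × Fin ℓ | (gridGraph ℓ ℓ).dist p x ≠ (gridGraph ℓ ℓ).dist p y}
      = {p : Fin ℓ × Fin ℓ |
          ((p.2 : ℕ) ≤ c ∧ a < (p.1 : ℕ)) ∨ (c < (p.2 : ℕ) ∧ (p.1 : ℕ) ≤ a)} := by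
  ext p
  simp only [Set.mem_setOf_eq, grid_dist_eq]
  unfold gridTax
  omega

/-- Key combinatorial/arithmetic lemma. -/
lemma grid_aux {V : Type*} (S : Set V) (f g : V → ℕ) (a a' a'' c : ℕ) (ha : a' ≠ a'')
    (u v w : V)
    (Hu : {p | (f p ≤ a ∧ c < g p) ∨ (a < f p ∧ g p ≤ c)} ∩ S = {u})
    (Hv : {p | (f p ≤ a' ∧ c < g p) ∨ (a' < f p ∧ g p ≤ c)} ∩ S = {v})
    (Hw : {p | (f p ≤ a'' ∧ c < g p) ∨ (a'' < f p ∧ g p ≤ c)} ∩ S = {w})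
    (huv : u ≠ v) (huw : u ≠ w) : v = w := by
  have hu0 : u ∈ {p | (f p ≤ a ∧ c < g p) ∨ (a < f p ∧ g p ≤ c)} ∩ S := by rw [Hu]; rfl
  have hv0 : v ∈ {p | (f p ≤ a' ∧ c < g p) ∨ (a' < f p ∧ g p ≤ c)} ∩ S := by rw [Hv]; rfl
  have hw0 : w ∈ {p | (f p ≤ a'' ∧ c < g p) ∨ (a'' < f p ∧ g p ≤ c)} ∩ S := by rw [Hw]; rfl
  obtain ⟨hu1, huS⟩ := hu0
  obtain ⟨hv1, hvS⟩ := hv0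
  obtain ⟨hw1, hwS⟩ := hw0
  have honlyu : ∀ p, ((f p ≤ a ∧ c < g p) ∨ (a < f p ∧ g p ≤ c)) → p ∈ S → p = u := by
    intro p h1 h2
    have : p ∈ ({u} : Set V) := Hu ▸ Set.mem_inter h1 h2
    exact this
  have honlyv : ∀ p, ((f p ≤ a' ∧ c < g p) ∨ (a' < f p ∧ g p ≤ c)) → p ∈ S → p = v := by
    intro p h1 h2
    have : p ∈ ({v} : Set V) := Hv ▸ Set.mem_inter h1 h2
    exact this
  have honlyw : ∀ p, ((f p ≤ a'' ∧ c < g p) ∨ (a'' < f p ∧ g p ≤ c)) → p ∈ S → p = w := by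
    intro p h1 h2
    have : p ∈ ({w} : Set V) := Hw ▸ Set.mem_inter h1 h2
    exact this
  have hu2 : ¬ ((f u ≤ a' ∧ c < g u) ∨ (a' < f u ∧ g u ≤ c)) :=
    fun h => huv (honlyv u h huS)
  have hu3 : ¬ ((f u ≤ a'' ∧ c < g u) ∨ (a'' < f u ∧ g u ≤ c)) :=
    fun h => huw (honlyw u h huS)
  have hv2 : ¬ ((f v ≤ a ∧ c < g v) ∨ (a < f v ∧ g v ≤ c)) :=
    fun h => huv ((honlyu v h hvS).symm)
  have hw2 : ¬ ((f w ≤ a ∧ c < g w) ∨ (a < f w ∧ g w ≤ c)) :=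
    fun h => huw ((honlyu w h hwS).symm)
  rw [not_or] at hu2 hu3 hv2 hw2
  have key : ((f w ≤ a' ∧ c < g w) ∨ (a' < f w ∧ g w ≤ c)) ∨
      ((f v ≤ a'' ∧ c < g v) ∨ (a'' < f v ∧ g v ≤ c)) := by
    rcases hu1 with h1 | h1 <;> rcases hv1 with h2 | h2 <;> rcases hw1 with h3 | h3 <;>
      rcases lt_or_gt_of_ne ha with h4 | h4 <;> omega
  rcases key with h | h
  · exact (honlyv w h hwS).symm
  · exact honlyw v h hvS

/-- let `{x,y}`, `{r,s}`, `{t,z}` be pairwise distinct `S`-unique diagonal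
pairs of the grid `G_ℓ`, each with elements at distance 2, lying in the same row
(resp. the same column), with associated vertices `u`, `v`, `w` respectively.
If `u ≠ v` and `u ≠ w`, then `v = w`. -/
theorem stmt12 (ℓ : ℕ) (hℓ : 2 ≤ ℓ) (S : Set (Fin ℓ × Fin ℓ))
    (hS : IsResolvingSet (gridGraph ℓ ℓ) S)
    (x y r s t z u v w : Fin ℓ × Fin ℓ)
    -- the three diagonal pairs, each written with its smaller element first
    (hdiag₁ : (x.1 : ℕ) + (x.2 : ℕ) = (y.1 : ℕ) + (y.2 : ℕ)) (hlt₁ : (x.1 : ℕ) < (y.1 : ℕ))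
    (hdiag₂ : (r.1 : ℕ) + (r.2 : ℕ) = (s.1 : ℕ) + (s.2 : ℕ)) (hlt₂ : (r.1 : ℕ) < (s.1 : ℕ))
    (hdiag₃ : (t.1 : ℕ) + (t.2 : ℕ) = (z.1 : ℕ) + (z.2 : ℕ)) (hlt₃ : (t.1 : ℕ) < (z.1 : ℕ))
    -- each pair has its elements at distance 2
    (hd₁ : (gridGraph ℓ ℓ).dist x y = 2)
    (hd₂ : (gridGraph ℓ ℓ).dist r s = 2)
    (hd₃ : (gridGraph ℓ ℓ).dist t z = 2)
    -- the three pairs are pairwise distinct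
    (hne₁₂ : ({x, y} : Finset (Fin ℓ × Fin ℓ)) ≠ {r, s})
    (hne₁₃ : ({x, y} : Finset (Fin ℓ × Fin ℓ)) ≠ {t, z})
    (hne₂₃ : ({r, s} : Finset (Fin ℓ × Fin ℓ)) ≠ {t, z})
    -- the three pairs lie in the same row, or all in the same column
    (hrowcol : (x.2 = r.2 ∧ y.2 = s.2 ∧ x.2 = t.2 ∧ y.2 = z.2) ∨
               (x.1 = r.1 ∧ y.1 = s.1 ∧ x.1 = t.1 ∧ y.1 = z.1))
    -- the pairs are `S`-unique with associated vertices `u`, `v`, `w`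
    (huniq₁ : {p : Fin ℓ × Fin ℓ |
        (gridGraph ℓ ℓ).dist p x ≠ (gridGraph ℓ ℓ).dist p y} ∩ S = {u})
    (huniq₂ : {p : Fin ℓ × Fin ℓ |
        (gridGraph ℓ ℓ).dist p r ≠ (gridGraph ℓ ℓ).dist p s} ∩ S = {v})
    (huniq₃ : {p : Fin ℓ × Fin ℓ |
        (gridGraph ℓ ℓ).dist p t ≠ (gridGraph ℓ ℓ).dist p z} ∩ S = {w})
    (huv : u ≠ v) (huw : u ≠ w) :
    v = w := by
  -- shape of the pairs
  have ht₁ : gridTax x y = 2 := by rw [← grid_dist_eq]; exact hd₁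
  have ht₂ : gridTax r s = 2 := by rw [← grid_dist_eq]; exact hd₂
  have ht₃ : gridTax t z = 2 := by rw [← grid_dist_eq]; exact hd₃
  unfold gridTax at ht₁ ht₂ ht₃
  have hx1 : (y.1 : ℕ) = x.1 + 1 ∧ (x.2 : ℕ) = y.2 + 1 := by omega
  have hx2 : (s.1 : ℕ) = r.1 + 1 ∧ (r.2 : ℕ) = s.2 + 1 := by omega
  have hx3 : (z.1 : ℕ) = t.1 + 1 ∧ (t.2 : ℕ) = z.2 + 1 := by omega
  rcases hrowcol with ⟨e1, e2, e3, e4⟩ | ⟨e1, e2, e3, e4⟩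
  · -- same row
    have e1' : (x.2 : ℕ) = r.2 := congrArg Fin.val e1
    have e2' : (y.2 : ℕ) = s.2 := congrArg Fin.val e2
    have e3' : (x.2 : ℕ) = t.2 := congrArg Fin.val e3
    have e4' : (y.2 : ℕ) = z.2 := congrArg Fin.val e4
    have hane : (r.1 : ℕ) ≠ (t.1 : ℕ) := by
      intro hrt
      apply hne₂₃
      have h1 : r = t := Prod.ext (Fin.val_injective hrt) (Fin.val_injective (by omega))
      have h2 : s = z := Prod.ext (Fin.val_injective (by omega)) (Fin.val_injective (by omega))
      rw [h1, h2]
    have Hu := huniq₁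
    have Hv := huniq₂
    have Hw := huniq₃
    rw [grid_resolve_eq x y hx1.1 hx1.2 (x.1 : ℕ) (y.2 : ℕ) rfl rfl] at Hu
    rw [grid_resolve_eq r s hx2.1 hx2.2 (r.1 : ℕ) (y.2 : ℕ) rfl e2'] at Hv
    rw [grid_resolve_eq t z hx3.1 hx3.2 (t.1 : ℕ) (y.2 : ℕ) rfl (by omega)] at Hw
    exact grid_aux S (fun p => (p.1 : ℕ)) (fun p => (p.2 : ℕ))
      (x.1 : ℕ) (r.1 : ℕ) (t.1 : ℕ) (y.2 : ℕ) hane u v w Hu Hv Hw huv huw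
  · -- same column
    have e1' : (x.1 : ℕ) = r.1 := congrArg Fin.val e1
    have e2' : (y.1 : ℕ) = s.1 := congrArg Fin.val e2
    have e3' : (x.1 : ℕ) = t.1 := congrArg Fin.val e3
    have e4' : (y.1 : ℕ) = z.1 := congrArg Fin.val e4
    have hane : (s.2 : ℕ) ≠ (z.2 : ℕ) := by
      intro hrt
      apply hne₂₃
      have h1 : r = t := Prod.ext (Fin.val_injective (by omega)) (Fin.val_injective (by omega))
      have h2 : s = z := Prod.ext (Fin.val_injective (by omega)) (Fin.val_injective hrt)
      rw [h1, h2]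
    have Hu := huniq₁
    have Hv := huniq₂
    have Hw := huniq₃
    rw [grid_resolve_eq' x y hx1.1 hx1.2 (x.1 : ℕ) (y.2 : ℕ) rfl rfl] at Hu
    rw [grid_resolve_eq' r s hx2.1 hx2.2 (x.1 : ℕ) (s.2 : ℕ) e1' rfl] at Hv
    rw [grid_resolve_eq' t z hx3.1 hx3.2 (x.1 : ℕ) (z.2 : ℕ) e3' rfl] at Hw
    exact grid_aux S (fun p => (p.2 : ℕ)) (fun p => (p.1 : ℕ))
      (y.2 : ℕ) (s.2 : ℕ) (z.2 : ℕ) (x.1 : ℕ) hane u v w Hu Hv Hw huv huw
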